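/- Suppose X ~ N(θ𝟙, Σ) in ℝ^G where θ ∈ ℝ is a scalar, 𝟙 the all-ones vector, and Σ positive definite. Among all weight vectors w with ∑_g w_g = 1, the one-sided test 1{wᵀX/√(wᵀΣw) > Φ^{-1}(1-C)} has rejection probability at θ = 0 equal to C for every such w, and its derivative of power with respect to θ at θ = 0 equals φ(Φ^{-1}(1-C))/√(wᵀΣw), which is maximized by the variance-minimizing weights w^s = Σ^{-1}𝟙/(𝟙ᵀΣ^{-1}𝟙). -/

import Mathlib

open MeasureTheory ProbabilityTheory Matrix

/-- Standard normal density. -/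
noncomputable def stdGaussianPDF (z : ℝ) : ℝ :=
  (Real.sqrt (2 * Real.pi))⁻¹ * Real.exp (-(z ^ 2) / 2)

/-- Standard normal CDF. -/
noncomputable def stdGaussianCDF (z : ℝ) : ℝ :=
  ∫ t in Set.Iic z, stdGaussianPDF t

lemma stdGaussianPDF_eq : stdGaussianPDF = gaussianPDFReal 0 1 := by
  funext x
  simp [stdGaussianPDF, gaussianPDFReal, neg_div]

lemma integrable_stdGaussianPDF : Integrable stdGaussianPDF := by
  rw [stdGaussianPDF_eq]; exact integrable_gaussianPDFReal 0 1

lemma integral_stdGaussianPDF : ∫ t, stdGaussianPDF t = 1 := by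
  rw [stdGaussianPDF_eq]; exact integral_gaussianPDFReal_eq_one 0 one_ne_zero

lemma continuous_stdGaussianPDF : Continuous stdGaussianPDF := by
  unfold stdGaussianPDF; fun_prop

lemma hasDerivAt_stdGaussianCDF (z : ℝ) :
    HasDerivAt stdGaussianCDF (stdGaussianPDF z) z := by
  have heq : ∀ u, stdGaussianCDF u
      = stdGaussianCDF 0 + ∫ t in (0:ℝ)..u, stdGaussianPDF t := by
    intro u
    rw [← intervalIntegral.integral_Iic_sub_Iic
      integrable_stdGaussianPDF.integrableOn integrable_stdGaussianPDF.integrableOn]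
    unfold stdGaussianCDF; ring
  have h : HasDerivAt (fun u => stdGaussianCDF 0 + ∫ t in (0:ℝ)..u, stdGaussianPDF t)
      (stdGaussianPDF z) z := (intervalIntegral.integral_hasDerivAt_right
    (integrable_stdGaussianPDF.intervalIntegrable)
    (continuous_stdGaussianPDF.stronglyMeasurable.stronglyMeasurableAtFilter)
    continuous_stdGaussianPDF.continuousAt).const_add (stdGaussianCDF 0)
  rw [funext heq]; exact h

lemma integral_Ioi_stdGaussianPDF (c C : ℝ) (hc : stdGaussianCDF c = 1 - C) :
    ∫ t in Set.Ioi c, stdGaussianPDF t = C := by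
  have h := intervalIntegral.integral_Iic_add_Ioi (b := c)
    integrable_stdGaussianPDF.integrableOn integrable_stdGaussianPDF.integrableOn
  rw [integral_stdGaussianPDF] at h
  have : stdGaussianCDF c + ∫ t in Set.Ioi c, stdGaussianPDF t = 1 := h
  linarith

lemma gauss_tail (v : ℝ) (hv : 0 < v) (c C : ℝ) (hc : stdGaussianCDF c = 1 - C) :
    gaussianReal 0 v.toNNReal {x | c < x / Real.sqrt v} = ENNReal.ofReal C := by
  have hs : 0 < Real.sqrt v := Real.sqrt_pos.mpr hv
  have hvn : (v.toNNReal : ℝ) = v := Real.coe_toNNReal _ hv.le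
  have hvn0 : v.toNNReal ≠ 0 := by
    simp only [ne_eq, Real.toNNReal_eq_zero, not_le]; exact hv
  have hset : {x | c < x / Real.sqrt v} = Set.Ioi (Real.sqrt v * c) := by
    ext x
    simp only [Set.mem_setOf_eq, Set.mem_Ioi]
    rw [lt_div_iff₀ hs, mul_comm]
  rw [hset, gaussianReal_apply_eq_integral 0 hvn0]
  congr 1
  -- key pointwise identity
  have hkey : ∀ t : ℝ, gaussianPDFReal 0 v.toNNReal (Real.sqrt v * t)
      = (Real.sqrt v)⁻¹ * stdGaussianPDF t := by
    intro t
    unfold gaussianPDFReal stdGaussianPDF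
    rw [hvn]
    have h1 : Real.sqrt (2 * Real.pi * v)
        = Real.sqrt (2 * Real.pi) * Real.sqrt v := by
      rw [Real.sqrt_mul (by positivity)]
    have h2 : (Real.sqrt v * t - 0) ^ 2 = v * t ^ 2 := by
      rw [sub_zero, mul_pow, Real.sq_sqrt hv.le]
    rw [h1, h2, mul_inv]
    have h3 : -(v * t ^ 2) / (2 * v) = -t ^ 2 / 2 := by
      field_simp
    rw [h3]; ring
  have hsub := integral_comp_mul_left_Ioi (gaussianPDFReal 0 v.toNNReal) c hs
  simp only [smul_eq_mul] at hsub
  have hsub' : ∫ t in Set.Ioi c, gaussianPDFReal 0 v.toNNReal (Real.sqrt v * t)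
      = (Real.sqrt v)⁻¹ * ∫ t in Set.Ioi c, stdGaussianPDF t := by
    rw [← integral_const_mul]
    exact setIntegral_congr_fun measurableSet_Ioi fun t _ => hkey t
  rw [hsub'] at hsub
  have := mul_left_cancel₀ (inv_ne_zero hs.ne') hsub.symm
  rw [this, integral_Ioi_stdGaussianPDF c C hc]

lemma symm_dot {G : ℕ} {M : Matrix (Fin G) (Fin G) ℝ} (hM : M.IsHermitian)
    (x y : Fin G → ℝ) : x ⬝ᵥ M.mulVec y = y ⬝ᵥ M.mulVec x := by
  have hMt : Mᵀ = M := by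
    rw [← Matrix.conjTranspose_eq_transpose_of_trivial]; exact hM.eq
  rw [Matrix.dotProduct_mulVec, ← Matrix.mulVec_transpose, hMt, dotProduct_comm]

lemma posdef_dot {G : ℕ} {M : Matrix (Fin G) (Fin G) ℝ} (hM : M.PosDef)
    {x : Fin G → ℝ} (hx : x ≠ 0) : 0 < x ⬝ᵥ M.mulVec x := by
  have := hM.dotProduct_mulVec_pos hx
  simpa using this

lemma possemidef_dot {G : ℕ} {M : Matrix (Fin G) (Fin G) ℝ} (hM : M.PosDef)
    (x : Fin G → ℝ) : 0 ≤ x ⬝ᵥ M.mulVec x := by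
  have := hM.posSemidef.dotProduct_mulVec_nonneg x
  simpa using this

/-- Under the common-parameter model `X ~ N(θ𝟙, Σ)`, every index test with weights
summing to one is similar at `θ = 0` with size `C`; its local power (derivative of
power at `θ = 0`) is `φ(c)/√(wᵀΣw)`, which is maximized by the variance-minimizing
weights `wˢ = Σ⁻¹𝟙/(𝟙ᵀΣ⁻¹𝟙)`. -/
theorem index_test_local_power (G : ℕ) (hG : 0 < G)
    (M : Matrix (Fin G) (Fin G) ℝ) (hM : M.PosDef)
    (C : ℝ) (hC0 : 0 < C) (hC1 : C < 1)
    (c : ℝ) (hc : stdGaussianCDF c = 1 - C) :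
    let one : Fin G → ℝ := fun _ => 1
    let ws : Fin G → ℝ := fun i => M⁻¹.mulVec one i / (one ⬝ᵥ M⁻¹.mulVec one)
    (∀ w : Fin G → ℝ, ∑ g, w g = 1 →
      gaussianReal 0 (w ⬝ᵥ M.mulVec w).toNNReal
          {x | c < x / Real.sqrt (w ⬝ᵥ M.mulVec w)} = ENNReal.ofReal C) ∧
    (∀ w : Fin G → ℝ, ∑ g, w g = 1 →
      HasDerivAt (fun θ : ℝ => 1 - stdGaussianCDF (c - θ / Real.sqrt (w ⬝ᵥ M.mulVec w)))
        (stdGaussianPDF c / Real.sqrt (w ⬝ᵥ M.mulVec w)) 0) ∧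
    (∀ w : Fin G → ℝ, ∑ g, w g = 1 →
      stdGaussianPDF c / Real.sqrt (w ⬝ᵥ M.mulVec w) ≤
        stdGaussianPDF c / Real.sqrt (ws ⬝ᵥ M.mulVec ws)) := by
  intro one ws
  have hone : one ≠ 0 := by
    intro h
    have := congrFun h ⟨0, hG⟩
    simp [one] at this
  have hwvar : ∀ w : Fin G → ℝ, ∑ g, w g = 1 → 0 < w ⬝ᵥ M.mulVec w := by
    intro w hw
    refine posdef_dot hM ?_
    intro h
    rw [h] at hw
    simp at hw
  set u : Fin G → ℝ := M⁻¹.mulVec one with hu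
  set K : ℝ := one ⬝ᵥ u with hK
  have hKpos : 0 < K := posdef_dot hM.inv hone
  have hdet : IsUnit M.det := isUnit_iff_ne_zero.mpr hM.det_pos.ne'
  have hMu : M.mulVec u = one := by
    rw [hu, Matrix.mulVec_mulVec, Matrix.mul_nonsing_inv _ hdet, Matrix.one_mulVec]
  have hws : ws = K⁻¹ • u := by
    funext i
    simp [ws, div_eq_inv_mul, hK, hu]
  have hMws : M.mulVec ws = K⁻¹ • one := by
    rw [hws, Matrix.mulVec_smul, hMu]
  have hdotws : ∀ x : Fin G → ℝ, x ⬝ᵥ M.mulVec ws = K⁻¹ * ∑ g, x g := by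
    intro x
    rw [hMws]
    simp [dotProduct, one, Finset.mul_sum, mul_comm]
    exact (Finset.sum_mul _ _ _).symm
  have hsum_ws : ∑ g, ws g = 1 := by
    have h1 : ∑ g, ws g = one ⬝ᵥ ws := by simp [dotProduct, one]
    rw [h1, hws]
    have : one ⬝ᵥ (K⁻¹ • u) = K⁻¹ * (one ⬝ᵥ u) := by
      simp [dotProduct, Finset.mul_sum, mul_comm, mul_left_comm]
    rw [this, ← hK, inv_mul_cancel₀ hKpos.ne']
  have hvar_ws : ws ⬝ᵥ M.mulVec ws = K⁻¹ := by
    rw [hdotws ws, hsum_ws, mul_one]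
  have hvar_ws_pos : 0 < ws ⬝ᵥ M.mulVec ws := by
    rw [hvar_ws]; exact inv_pos.mpr hKpos
  have hmin : ∀ w : Fin G → ℝ, ∑ g, w g = 1 →
      ws ⬝ᵥ M.mulVec ws ≤ w ⬝ᵥ M.mulVec w := by
    intro w hw
    set d : Fin G → ℝ := w - ws with hd
    have hwd : w = ws + d := by rw [hd]; abel
    have hdsum : ∑ g, d g = 0 := by
      simp [hd, Finset.sum_sub_distrib, hw, hsum_ws, Pi.sub_apply]
    have hdws : d ⬝ᵥ M.mulVec ws = 0 := by
      rw [hdotws d, hdsum, mul_zero]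
    have hwsd : ws ⬝ᵥ M.mulVec d = 0 := by
      rw [symm_dot hM.isHermitian, hdws]
    have hdd : 0 ≤ d ⬝ᵥ M.mulVec d := possemidef_dot hM d
    have hexp : w ⬝ᵥ M.mulVec w
        = ws ⬝ᵥ M.mulVec ws + ws ⬝ᵥ M.mulVec d + d ⬝ᵥ M.mulVec ws + d ⬝ᵥ M.mulVec d := by
      rw [hwd, Matrix.mulVec_add, add_dotProduct, dotProduct_add,
        dotProduct_add]
      ring
    rw [hexp, hdws, hwsd]
    linarith
  refine ⟨?_, ?_, ?_⟩
  · intro w hw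
    exact gauss_tail _ (hwvar w hw) c C hc
  · intro w hw
    set s : ℝ := Real.sqrt (w ⬝ᵥ M.mulVec w) with hsdef
    have hs : 0 < s := Real.sqrt_pos.mpr (hwvar w hw)
    have h1 : HasDerivAt (fun θ : ℝ => c - θ / s) (-(1 / s)) 0 :=
      ((hasDerivAt_id 0).div_const s).const_sub c
    have hF : HasDerivAt stdGaussianCDF (stdGaussianPDF c) ((fun θ : ℝ => c - θ / s) 0) := by
      simpa using hasDerivAt_stdGaussianCDF c
    have hcomp := (hF.comp 0 h1).const_sub 1
    convert hcomp using 1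
    · rfl
    · rfl
    · rfl
    · ring
  · intro w hw
    have hpdf : 0 ≤ stdGaussianPDF c := by
      unfold stdGaussianPDF; positivity
    have hsq : Real.sqrt (ws ⬝ᵥ M.mulVec ws) ≤ Real.sqrt (w ⬝ᵥ M.mulVec w) :=
      Real.sqrt_le_sqrt (hmin w hw)
    have hpos : 0 < Real.sqrt (ws ⬝ᵥ M.mulVec ws) := Real.sqrt_pos.mpr hvar_ws_pos
    exact div_le_div_of_nonneg_left hpdf hpos hsq |>.trans_eq rfl
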